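/- arXiv:1505.01858 — 2 statements merged into one kernel-verified Lean document; each statement's English description precedes it below -/
import Mathlib

section
/- For α > 2, the integral ∫₀^∞ (1 − 1/(1 + s r^{−α})) · 2π r dr equals π s^{2/α} · Γ(1 + 2/α) Γ(1 − 2/α) = π s^{2/α}/sinc(2/α) for all s > 0. -/
open MeasureTheory Real

noncomputable def sinc (z : ℝ) : ℝ := Real.sin (Real.pi * z) / (Real.pi * z)

/-- The real Beta integral `∫₀¹ t^(a-1) (1-t)^(-a) dt = Γ(a) Γ(1-a)` for `0 < a < 1`. -/
lemma beta_Ioo_aux (a : ℝ) (h0 : 0 < a) (h1 : a < 1) :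
    ∫ t in Set.Ioo (0:ℝ) 1, t ^ (a - 1) * (1 - t) ^ (-a)
      = Real.Gamma a * Real.Gamma (1 - a) := by
  have h1a : (0:ℝ) < 1 - a := by linarith
  have hB := Complex.Gamma_mul_Gamma_eq_betaIntegral (s := (a:ℂ)) (t := ((1 - a : ℝ) : ℂ))
      (by simpa using h0) (by simpa using h1a)
  rw [show (a:ℂ) + ((1 - a : ℝ):ℂ) = 1 by push_cast; ring, Complex.Gamma_one, one_mul] at hB
  have key : Complex.betaIntegral (a:ℂ) ((1 - a : ℝ):ℂ)
      = ((∫ t in Set.Ioo (0:ℝ) 1, t ^ (a - 1) * (1 - t) ^ (-a) : ℝ) : ℂ) := by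
    rw [Complex.betaIntegral, intervalIntegral.integral_of_le zero_le_one,
      MeasureTheory.integral_Ioc_eq_integral_Ioo]
    calc ∫ t in Set.Ioo (0:ℝ) 1, (t:ℂ) ^ ((a:ℂ) - 1) * (1 - (t:ℂ)) ^ (((1 - a : ℝ):ℂ) - 1)
        = ∫ t in Set.Ioo (0:ℝ) 1, ((t ^ (a - 1) * (1 - t) ^ (-a) : ℝ) : ℂ) := by
          refine MeasureTheory.setIntegral_congr_fun measurableSet_Ioo fun x hx => ?_
          obtain ⟨hx0, hx1⟩ := hx
          rw [Complex.ofReal_mul, Complex.ofReal_cpow hx0.le,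
            Complex.ofReal_cpow (by linarith : (0:ℝ) ≤ 1 - x)]
          push_cast
          ring_nf
      _ = ((∫ t in Set.Ioo (0:ℝ) 1, t ^ (a - 1) * (1 - t) ^ (-a) : ℝ) : ℂ) :=
          integral_ofReal
  rw [key, Complex.Gamma_ofReal, Complex.Gamma_ofReal, ← Complex.ofReal_mul] at hB
  exact_mod_cast hB.symm

/-- The key PGFL integral: for `α > 2` and `s > 0`,
`∫₀^∞ (1 - 1/(1 + s r⁻ᵅ)) 2πr dr = π s^{2/α} Γ(1+2/α) Γ(1-2/α) = π s^{2/α}/sinc(2/α)`. -/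
theorem pgfl_key_integral (α : ℝ) (hα : 2 < α) (s : ℝ) (hs : 0 < s) :
    (∫ r in Set.Ioi (0:ℝ), (1 - 1 / (1 + s * r ^ (-α))) * (2 * Real.pi * r))
        = Real.pi * s ^ (2 / α) * (Real.Gamma (1 + 2 / α) * Real.Gamma (1 - 2 / α)) ∧
    (∫ r in Set.Ioi (0:ℝ), (1 - 1 / (1 + s * r ^ (-α))) * (2 * Real.pi * r))
        = Real.pi * s ^ (2 / α) / _root_.sinc (2 / α) := by
  have hα0 : (0:ℝ) < α := by linarith
  set a : ℝ := 2 / α with ha_def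
  have ha0 : 0 < a := by positivity
  have ha1 : a < 1 := by rw [ha_def, div_lt_one hα0]; linarith
  set φ : ℝ → ℝ := fun t => (s * (t / (1 - t))) ^ α⁻¹ with hφdef
  set φ' : ℝ → ℝ := fun t => α⁻¹ * (s * (t / (1 - t))) ^ (α⁻¹ - 1) * (s / (1 - t) ^ 2)
    with hφ'def
  -- image of the substitution
  have himg : Set.Ioi (0:ℝ) = φ '' Set.Ioo 0 1 := by
    ext y
    constructor
    · intro hy
      have hy' : 0 < y := hy
      have hyα : 0 < y ^ α := rpow_pos_of_pos hy' α
      refine ⟨y ^ α / (s + y ^ α), ⟨by positivity, ?_⟩, ?_⟩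
      · rw [div_lt_one (by positivity)]; linarith
      · show (s * ((y ^ α / (s + y ^ α)) / (1 - y ^ α / (s + y ^ α)))) ^ α⁻¹ = y
        have h1 : 1 - y ^ α / (s + y ^ α) = s / (s + y ^ α) := by
          field_simp
          ring
        rw [h1, show s * ((y ^ α / (s + y ^ α)) / (s / (s + y ^ α))) = y ^ α by
          field_simp]
        exact Real.rpow_rpow_inv hy'.le hα0.ne'
    · rintro ⟨t, ⟨ht0, ht1⟩, rfl⟩
      have h1t : (0:ℝ) < 1 - t := by linarith
      exact rpow_pos_of_pos (by positivity) _
  -- injectivity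
  have hinj : Set.InjOn φ (Set.Ioo 0 1) := by
    rintro t₁ ⟨ht₁0, ht₁1⟩ t₂ ⟨ht₂0, ht₂1⟩ heq
    have h1t₁ : (0:ℝ) < 1 - t₁ := by linarith
    have h1t₂ : (0:ℝ) < 1 - t₂ := by linarith
    have hu₁ : 0 < s * (t₁ / (1 - t₁)) := by positivity
    have hu₂ : 0 < s * (t₂ / (1 - t₂)) := by positivity
    have h := congrArg (fun x => x ^ α) heq
    simp only [hφdef] at h
    rw [Real.rpow_inv_rpow hu₁.le hα0.ne', Real.rpow_inv_rpow hu₂.le hα0.ne'] at h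
    have h2 := mul_left_cancel₀ hs.ne' h
    rw [div_eq_div_iff h1t₁.ne' h1t₂.ne'] at h2
    nlinarith
  -- the derivative
  have hderiv : ∀ t ∈ Set.Ioo (0:ℝ) 1, HasDerivWithinAt φ (φ' t) (Set.Ioo (0:ℝ) 1) t := by
    rintro t ⟨ht0, ht1⟩
    have h1t : (0:ℝ) < 1 - t := by linarith
    have hu : 0 < s * (t / (1 - t)) := by positivity
    have H := ((((hasDerivAt_id t).div ((hasDerivAt_id t).const_sub 1) h1t.ne')).const_mul
      s).rpow_const (p := α⁻¹) (Or.inl hu.ne')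
    refine (HasDerivAt.hasDerivWithinAt ?_)
    refine H.congr_deriv ?_
    simp only [hφ'def, Pi.div_apply, id_eq]
    rw [show (1 * (1 - t) - t * -1) = 1 by ring]
    ring
  -- the substituted integral
  have hsub : (∫ r in Set.Ioi (0:ℝ), (1 - 1 / (1 + s * r ^ (-α))) * (2 * Real.pi * r))
      = ∫ t in Set.Ioo (0:ℝ) 1,
          (2 * Real.pi / α * s ^ a) * (t ^ (a - 1) * (1 - t) ^ (-a)) := by
    rw [himg, MeasureTheory.integral_image_eq_integral_abs_deriv_smul measurableSet_Ioo
      hderiv hinj]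
    refine MeasureTheory.setIntegral_congr_fun measurableSet_Ioo fun t ht => ?_
    obtain ⟨ht0, ht1⟩ := ht
    have h1t : (0:ℝ) < 1 - t := by linarith
    have hw : 0 < t / (1 - t) := by positivity
    have hu : 0 < s * (t / (1 - t)) := by positivity
    have hφt : φ t = (s * (t / (1 - t))) ^ α⁻¹ := rfl
    have hsφ : s * (φ t) ^ (-α) = (1 - t) / t := by
      rw [hφt, ← Real.rpow_mul hu.le, show α⁻¹ * (-α) = -1 by field_simp,
        Real.rpow_neg_one, mul_inv]
      field_simp
    have hF : 1 - 1 / (1 + s * (φ t) ^ (-α)) = 1 - t := by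
      rw [hsφ, show (1:ℝ) + (1 - t) / t = 1 / t by field_simp; ring, one_div_one_div]
    have hφ'v : φ' t = α⁻¹ * (s * (t / (1 - t))) ^ (α⁻¹ - 1) * (s / (1 - t) ^ 2) := rfl
    have hφ'pos : 0 ≤ φ' t := by
      rw [hφ'v]; positivity
    rw [smul_eq_mul, abs_of_nonneg hφ'pos, hF, hφ'v, hφt]
    -- now pure rpow algebra
    have e1 : (s * (t / (1 - t))) ^ (α⁻¹ - 1) * (s * (t / (1 - t))) ^ α⁻¹
        = (s * (t / (1 - t))) ^ (a - 1) := by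
      rw [← Real.rpow_add hu]; congr 1
      rw [ha_def]; field_simp; ring
    have e2 : (s * (t / (1 - t))) ^ (a - 1)
        = s ^ (a - 1) * (t ^ (a - 1) / (1 - t) ^ (a - 1)) := by
      rw [Real.mul_rpow hs.le hw.le, Real.div_rpow ht0.le h1t.le]
    have e3 : s ^ a = s * s ^ (a - 1) := by
      rw [show a = 1 + (a - 1) by ring, Real.rpow_add hs, Real.rpow_one]; ring_nf
    have e4 : (1 - t) ^ (-a) = ((1 - t) ^ (a - 1))⁻¹ * ((1 - t) ^ (2:ℝ))⁻¹ * (1 - t) := by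
      rw [← Real.rpow_neg h1t.le, ← Real.rpow_neg h1t.le, ← Real.rpow_add h1t,
        show -(a - 1) + -(2:ℝ) = -a + -1 by ring, Real.rpow_add h1t, Real.rpow_neg_one]
      field_simp
    have e5 : ((1 - t) ^ (2:ℝ)) = (1 - t) ^ (2:ℕ) := by
      rw [← Real.rpow_natCast (1 - t) 2]; norm_num
    calc α⁻¹ * (s * (t / (1 - t))) ^ (α⁻¹ - 1) * (s / (1 - t) ^ 2) *
          ((1 - t) * (2 * Real.pi * (s * (t / (1 - t))) ^ α⁻¹))
        = α⁻¹ * (s / (1 - t) ^ 2) * (1 - t) * (2 * Real.pi) *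
            ((s * (t / (1 - t))) ^ (α⁻¹ - 1) * (s * (t / (1 - t))) ^ α⁻¹) := by
          ring
      _ = 2 * Real.pi / α * s ^ a * (t ^ (a - 1) * (1 - t) ^ (-a)) := by
          rw [e1, e2, e3, e4, e5]
          have hp : ((1 - t) ^ (a - 1)) ≠ 0 := by
            exact (Real.rpow_pos_of_pos h1t _).ne'
          field_simp
  rw [hsub, MeasureTheory.integral_const_mul, beta_Ioo_aux a ha0 ha1]
  have hGamma1 : Real.Gamma (1 + a) = a * Real.Gamma a := by
    rw [add_comm, Real.Gamma_add_one ha0.ne']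
  have hsin : 0 < Real.sin (Real.pi * a) := by
    apply Real.sin_pos_of_pos_of_lt_pi
    · positivity
    · nlinarith [Real.pi_pos]
  have hrefl : Real.Gamma a * Real.Gamma (1 - a) = Real.pi / Real.sin (Real.pi * a) :=
    Real.Gamma_mul_Gamma_one_sub a
  constructor
  · rw [hGamma1]
    rw [ha_def]
    ring
  · rw [hrefl, _root_.sinc]
    rw [ha_def] at *
    field_simp
end

section
/- Let R be a random variable with density f_R(r) = 2r/R_0² on [0, R_0] (distance from a uniform point in a disc of radius R_0 to the center), let Y ~ Gamma(U,1) with integer U ≥ 1 be independent of R, and let κ > 0, α > 2. Then E[exp(−κ R^{−α} Y)] = (κ^{2/α}/R_0²)[ y^{U + 2/α − 1}(1−y)^{−2/α} − (U + 2/α − 1) B(y; U + 2/α − 1, 1 − 2/α) ], where y = 1/(κ R_0^{−α} + 1) and B(y; a, b) = ∫₀^y t^{a−1}(1−t)^{b−1} dt is the incomplete Beta function. -/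
open MeasureTheory ProbabilityTheory Real
open scoped ENNReal NNReal

/-- Lower incomplete Beta function `B(y; a, b) = ∫₀^y t^{a-1}(1-t)^{b-1} dt`. -/
noncomputable def incBeta (y a b : ℝ) : ℝ := ∫ t in (0:ℝ)..y, t ^ (a - 1) * (1 - t) ^ (b - 1)

lemma gamma_laplace (U : ℕ) (hU : 1 ≤ U) {s : ℝ} (hs : 0 ≤ s) :
    ∫ y, Real.exp (-(s * y)) ∂(gammaMeasure U 1) = (1 + s) ^ (-(U:ℝ)) := by
  have hU0 : (0:ℝ) < (U:ℝ) := by exact_mod_cast hU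
  have hΓ : 0 < Real.Gamma (U:ℝ) := Real.Gamma_pos_of_pos hU0
  have h1s : (0:ℝ) < 1 + s := by linarith
  have hpdf : (gammaPDF (U:ℝ) 1) = fun x => ((fun x => (gammaPDFReal (U:ℝ) 1 x).toNNReal) x : ℝ≥0∞) := by
    funext x; rfl
  rw [gammaMeasure, hpdf,
    integral_withDensity_eq_integral_smul (by measurability) _]
  have : ∀ x : ℝ, (gammaPDFReal (U:ℝ) 1 x).toNNReal • Real.exp (-(s * x))
      = Set.indicator (Set.Ici (0:ℝ))
          (fun x => (1 / Real.Gamma (U:ℝ)) * (x ^ ((U:ℝ) - 1) * Real.exp (-((1+s) * x)))) x := by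
    intro x
    simp only [NNReal.smul_def, smul_eq_mul]
    rw [Real.coe_toNNReal _ (gammaPDFReal_nonneg hU0 one_pos x)]
    by_cases hx : 0 ≤ x
    · rw [Set.indicator_of_mem (Set.mem_Ici.mpr hx), gammaPDFReal, if_pos hx]
      rw [show (-((1+s)*x)) = -(1*x) + -(s*x) by ring, Real.exp_add]
      rw [Real.one_rpow]
      ring
    · rw [Set.indicator_of_notMem (by simpa using hx), gammaPDFReal, if_neg hx, zero_mul]
  simp_rw [this]
  rw [integral_indicator measurableSet_Ici, integral_Ici_eq_integral_Ioi,
    integral_const_mul, integral_rpow_mul_exp_neg_mul_Ioi hU0 h1s]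
  rw [show (1/(1+s)) = (1+s)⁻¹ from one_div _, Real.inv_rpow h1s.le, ← Real.rpow_neg h1s.le]
  field_simp

lemma map_R_eq {Ω : Type*} [MeasurableSpace Ω] (μ : Measure Ω) [IsProbabilityMeasure μ]
    (R : Ω → ℝ) (hR : Measurable R) (R₀ : ℝ) (hR₀ : 0 < R₀)
    (hRcdf : ∀ t ∈ Set.Icc (0:ℝ) R₀, (μ {ω | R ω ≤ t}).toReal = t ^ 2 / R₀ ^ 2)
    (hRrange : ∀ ω, R ω ∈ Set.Icc (0:ℝ) R₀) :
    μ.map R = volume.withDensity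
      (fun r => ENNReal.ofReal ((Set.Ioc 0 R₀).indicator (fun r => 2*r/R₀^2) r)) := by
  have key : ∀ u : ℝ, 0 ≤ u → u ≤ R₀ →
      (∫⁻ x in Set.Ioc 0 u, ENNReal.ofReal (2*x/R₀^2)) = ENNReal.ofReal (u^2/R₀^2) := by
    intro u hu0 huR
    rw [← ofReal_integral_eq_lintegral_ofReal]
    · congr 1
      rw [← intervalIntegral.integral_of_le hu0]
      have : ∀ x : ℝ, 2*x/R₀^2 = (2/R₀^2) * x := by intro x; ring
      simp_rw [this]
      rw [intervalIntegral.integral_const_mul, integral_id]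
      field_simp
      ring
    · exact Continuous.integrableOn_Ioc (by continuity)
    · filter_upwards [ae_restrict_mem measurableSet_Ioc] with x hx
      have : (0:ℝ) < x := hx.1
      positivity
  have hcdfE : ∀ t ∈ Set.Icc (0:ℝ) R₀, μ {ω | R ω ≤ t} = ENNReal.ofReal (t^2/R₀^2) := by
    intro t ht
    rw [← hRcdf t ht, ENNReal.ofReal_toReal (measure_ne_top μ _)]
  refine Measure.ext_of_Iic _ _ (fun t => ?_)
  rw [Measure.map_apply hR measurableSet_Iic,
    withDensity_apply _ measurableSet_Iic,
    show R ⁻¹' Set.Iic t = {ω | R ω ≤ t} from rfl]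
  have hind : ∀ x : ℝ, ENNReal.ofReal ((Set.Ioc 0 R₀).indicator (fun r => 2*r/R₀^2) x)
      = (Set.Ioc 0 R₀).indicator (fun r => ENNReal.ofReal (2*r/R₀^2)) x := by
    intro x
    by_cases hx : x ∈ Set.Ioc 0 R₀
    · rw [Set.indicator_of_mem hx, Set.indicator_of_mem hx]
    · rw [Set.indicator_of_notMem hx, Set.indicator_of_notMem hx, ENNReal.ofReal_zero]
  simp_rw [hind]
  rw [lintegral_indicator measurableSet_Ioc, Measure.restrict_restrict measurableSet_Ioc]
  rcases le_or_gt t 0 with ht | ht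
  · have h1 : Set.Ioc (0:ℝ) R₀ ∩ Set.Iic t = ∅ := by
      ext x; simp only [Set.mem_inter_iff, Set.mem_Ioc, Set.mem_Iic, Set.mem_empty_iff_false,
        iff_false]
      rintro ⟨⟨hx1, _⟩, hx2⟩; linarith
    rw [h1]
    simp only [Measure.restrict_empty, lintegral_zero_measure]
    have h0 : μ {ω | R ω ≤ 0} = 0 := by
      have := hcdfE 0 ⟨le_refl _, hR₀.le⟩
      simpa using this
    refine le_antisymm ?_ (zero_le)
    rw [← h0]
    exact measure_mono (fun ω hω => le_trans hω ht)
  rcases le_or_gt t R₀ with htR | htR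
  · have h1 : Set.Ioc (0:ℝ) R₀ ∩ Set.Iic t = Set.Ioc 0 t := by
      ext x; simp only [Set.mem_inter_iff, Set.mem_Ioc, Set.mem_Iic]
      constructor
      · rintro ⟨⟨h1, h2⟩, h3⟩; exact ⟨h1, h3⟩
      · rintro ⟨h1, h2⟩; exact ⟨⟨h1, le_trans h2 htR⟩, h2⟩
    rw [h1, key t ht.le htR, hcdfE t ⟨ht.le, htR⟩]
  · have h1 : Set.Ioc (0:ℝ) R₀ ∩ Set.Iic t = Set.Ioc 0 R₀ := by
      ext x; simp only [Set.mem_inter_iff, Set.mem_Ioc, Set.mem_Iic]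
      constructor
      · rintro ⟨⟨h1, h2⟩, h3⟩; exact ⟨h1, h2⟩
      · rintro ⟨h1, h2⟩; exact ⟨⟨h1, h2⟩, le_trans h2 htR.le⟩
    rw [h1, key R₀ hR₀.le le_rfl]
    have h2 : {ω | R ω ≤ t} = Set.univ := by
      ext ω; simp only [Set.mem_setOf_eq, Set.mem_univ, iff_true]
      exact le_trans (hRrange ω).2 htR.le
    rw [h2]
    simp [div_self (pow_ne_zero 2 hR₀.ne')]

lemma integral_density (R₀ : ℝ) (hR₀ : 0 < R₀) (g : ℝ → ℝ) (hg : Measurable g) :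
    ∫ x, g x ∂(volume.withDensity
        (fun r => ENNReal.ofReal ((Set.Ioc 0 R₀).indicator (fun r => 2*r/R₀^2) r)))
      = ∫ x in (0:ℝ)..R₀, g x * (2*x/R₀^2) := by
  have hmeas : Measurable (fun r : ℝ => ((Set.Ioc 0 R₀).indicator (fun r => 2*r/R₀^2) r).toNNReal) := by
    apply Measurable.real_toNNReal
    exact Measurable.indicator (by fun_prop) measurableSet_Ioc
  rw [show (fun r : ℝ => ENNReal.ofReal ((Set.Ioc 0 R₀).indicator (fun r => 2*r/R₀^2) r))
      = fun r : ℝ => (((Set.Ioc 0 R₀).indicator (fun r => 2*r/R₀^2) r).toNNReal : ℝ≥0∞) from rfl,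
    integral_withDensity_eq_integral_smul hmeas g]
  have : ∀ x : ℝ, ((Set.Ioc 0 R₀).indicator (fun r => 2*r/R₀^2) x).toNNReal • g x
      = (Set.Ioc 0 R₀).indicator (fun x => g x * (2*x/R₀^2)) x := by
    intro x
    simp only [NNReal.smul_def, smul_eq_mul]
    by_cases hx : x ∈ Set.Ioc 0 R₀
    · rw [Set.indicator_of_mem hx, Set.indicator_of_mem hx,
        Real.coe_toNNReal _ (by have : (0:ℝ) < x := hx.1; positivity)]
      ring
    · rw [Set.indicator_of_notMem hx, Set.indicator_of_notMem hx]
      simp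
  simp_rw [this]
  rw [integral_indicator measurableSet_Ioc, ← intervalIntegral.integral_of_le hR₀.le]

lemma step2 {Ω : Type*} [MeasurableSpace Ω] (μ : Measure Ω) [IsProbabilityMeasure μ]
    (R Y : Ω → ℝ) (hR : Measurable R) (hY : Measurable Y)
    (R₀ : ℝ) (hR₀ : 0 < R₀)
    (hRrange : ∀ ω, R ω ∈ Set.Icc (0:ℝ) R₀)
    (U : ℕ) (hU : 1 ≤ U) (hYgamma : μ.map Y = gammaMeasure U 1)
    (hindep : IndepFun R Y μ)
    (κ α : ℝ) (hκ : 0 < κ) (hα : 2 < α)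
    (hgl : ∀ s : ℝ, 0 ≤ s → ∫ y, Real.exp (-(s * y)) ∂(gammaMeasure U 1) = (1 + s) ^ (-(U:ℝ))) :
    ∫ ω, Real.exp (-(κ * R ω ^ (-α) * Y ω)) ∂μ
      = ∫ r, (1 + κ * r ^ (-α)) ^ (-(U:ℝ)) ∂(μ.map R) := by
  have hF : Measurable (fun p : ℝ × ℝ => Real.exp (-(κ * p.1 ^ (-α) * p.2))) := by
    fun_prop
  have hmap : μ.map (fun ω => (R ω, Y ω)) = (μ.map R).prod (μ.map Y) :=
    (ProbabilityTheory.indepFun_iff_map_prod_eq_prod_map_map hR.aemeasurable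
      hY.aemeasurable).mp hindep
  have hLHS : ∫ ω, Real.exp (-(κ * R ω ^ (-α) * Y ω)) ∂μ
      = ∫ p : ℝ × ℝ, Real.exp (-(κ * p.1 ^ (-α) * p.2))
          ∂((μ.map R).prod (gammaMeasure U 1)) := by
    rw [← hYgamma, ← hmap, integral_map (hR.prodMk hY).aemeasurable
      hF.aestronglyMeasurable]
  rw [hLHS]
  have hprob : IsProbabilityMeasure (μ.map R) := Measure.isProbabilityMeasure_map hR.aemeasurable
  -- a.e. support facts
  have hae1 : ∀ᵐ r ∂(μ.map R), r ∈ Set.Icc (0:ℝ) R₀ := by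
    rw [ae_iff]
    have hms : MeasurableSet {r : ℝ | ¬ r ∈ Set.Icc (0:ℝ) R₀} := measurableSet_Icc.compl
    rw [Measure.map_apply hR hms]
    have hempty : R ⁻¹' {r : ℝ | ¬ r ∈ Set.Icc (0:ℝ) R₀} = ∅ := by
      ext ω; simp only [Set.mem_preimage, Set.mem_setOf_eq, Set.mem_empty_iff_false, iff_false,
            Decidable.not_not]; exact hRrange ω
    rw [hempty]; simp
  have hae2 : (gammaMeasure (U:ℝ) 1) (Set.Iio (0:ℝ)) = 0 := by
    rw [gammaMeasure, withDensity_apply _ measurableSet_Iio]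
    exact lintegral_gammaPDF_of_nonpos le_rfl
  have hgprob : IsProbabilityMeasure (gammaMeasure (U:ℝ) 1) :=
    isProbabilityMeasure_gammaMeasure (by exact_mod_cast hU) one_pos
  have haeprod : ∀ᵐ p : ℝ × ℝ ∂((μ.map R).prod (gammaMeasure (U:ℝ) 1)),
      p.1 ∈ Set.Icc (0:ℝ) R₀ ∧ 0 ≤ p.2 := by
    rw [ae_iff]
    have hsub : {p : ℝ × ℝ | ¬ (p.1 ∈ Set.Icc (0:ℝ) R₀ ∧ 0 ≤ p.2)}
        ⊆ ((Set.Icc (0:ℝ) R₀)ᶜ ×ˢ Set.univ) ∪ (Set.univ ×ˢ Set.Iio (0:ℝ)) := by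
      rintro ⟨r, y⟩ hp
      simp only [Set.mem_setOf_eq, not_and_or] at hp
      rcases hp with h | h
      · exact Or.inl ⟨h, Set.mem_univ _⟩
      · exact Or.inr ⟨Set.mem_univ _, by simpa using h⟩
    refine le_antisymm (le_trans (measure_mono hsub) ?_) (zero_le)
    refine le_trans (measure_union_le _ _) ?_
    rw [Measure.prod_prod, Measure.prod_prod]
    have h1 : (μ.map R) (Set.Icc (0:ℝ) R₀)ᶜ = 0 := ae_iff.mp hae1
    rw [h1, hae2]
    simp
  have hInt : Integrable (fun p : ℝ × ℝ => Real.exp (-(κ * p.1 ^ (-α) * p.2)))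
      ((μ.map R).prod (gammaMeasure (U:ℝ) 1)) := by
    refine Integrable.mono' (integrable_const 1) hF.aestronglyMeasurable ?_
    filter_upwards [haeprod] with p hp
    rw [Real.norm_eq_abs, abs_of_pos (Real.exp_pos _)]
    rw [Real.exp_le_one_iff]
    have h1 : 0 ≤ p.1 ^ (-α) := Real.rpow_nonneg hp.1.1 _
    have : 0 ≤ κ * p.1 ^ (-α) * p.2 := mul_nonneg (mul_nonneg hκ.le h1) hp.2
    linarith
  rw [MeasureTheory.integral_prod _ hInt]
  refine integral_congr_ae ?_
  filter_upwards [hae1] with r hr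
  have hs : 0 ≤ κ * r ^ (-α) := by
    have := Real.rpow_nonneg hr.1 (-α)
    positivity
  rw [← hgl _ hs]

lemma calc_main (κ α R₀ : ℝ) (hκ : 0 < κ) (hα : 2 < α) (hR₀ : 0 < R₀) (U : ℕ) (hU : 1 ≤ U) :
    ∫ r in (0:ℝ)..R₀, (1 + κ * r ^ (-α)) ^ (-(U:ℝ)) * (2*r/R₀^2)
      = (κ ^ (2 / α) / R₀ ^ 2) *
          ((1 / (κ * R₀ ^ (-α) + 1)) ^ ((U : ℝ) + 2 / α - 1)
              * (1 - 1 / (κ * R₀ ^ (-α) + 1)) ^ (-(2 / α))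
            - ((U : ℝ) + 2 / α - 1) *
                incBeta (1 / (κ * R₀ ^ (-α) + 1)) ((U : ℝ) + 2 / α - 1) (1 - 2 / α)) := by
  have hα0 : (0:ℝ) < α := by linarith
  have hα1 : (1:ℝ) ≤ α := by linarith
  set c : ℝ := 2/α with hc
  have hc0 : 0 < c := by positivity
  have hc1 : c < 1 := by
    rw [hc, div_lt_one hα0]; linarith
  set a : ℝ := (U:ℝ) + c - 1 with ha
  have hU1 : (1:ℝ) ≤ (U:ℝ) := by exact_mod_cast hU
  have ha0 : 0 < a := by rw [ha]; linarith
  set f : ℝ → ℝ := fun r => r^α/(r^α+κ) with hf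
  set f' : ℝ → ℝ := fun r => κ*α*r^(α-1)/(r^α+κ)^2 with hf'
  set g : ℝ → ℝ := fun t => (κ^c*c/R₀^2) * (t^a * (1-t)^(-c-1)) with hg
  have hPpos : ∀ r : ℝ, 0 ≤ r → 0 < r^α + κ := by
    intro r hr
    have : 0 ≤ r^α := rpow_nonneg hr α
    linarith
  have hf0 : f 0 = 0 := by
    simp only [hf]
    rw [zero_rpow hα0.ne']
    simp
  have hflt1 : ∀ r : ℝ, 0 ≤ r → f r < 1 := by
    intro r hr
    simp only [hf]
    rw [div_lt_one (hPpos r hr)]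
    linarith [rpow_nonneg hr α]
  have hfnn : ∀ r : ℝ, 0 ≤ r → 0 ≤ f r := by
    intro r hr
    exact div_nonneg (rpow_nonneg hr α) (hPpos r hr).le
  set y : ℝ := f R₀ with hy
  have hy0 : 0 < y := by
    rw [hy]
    exact div_pos (rpow_pos_of_pos hR₀ α) (hPpos R₀ hR₀.le)
  have hy1 : y < 1 := hflt1 R₀ hR₀.le
  -- Step 1 : substitution
  have hderiv : ∀ r ∈ Set.uIcc (0:ℝ) R₀, HasDerivAt f (f' r) r := by
    intro r hr
    rw [Set.uIcc_of_le hR₀.le] at hr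
    have h1 : HasDerivAt (fun x : ℝ => x^α) (α * r^(α-1)) r :=
      Real.hasDerivAt_rpow_const (Or.inr hα1)
    have h2 : HasDerivAt (fun x : ℝ => x^α + κ) (α * r^(α-1)) r := h1.add_const κ
    have hdd := h1.div h2 (hPpos r hr.1).ne'
    rw [hf, hf']
    refine hdd.congr_deriv ?_
    ring
  have hcontf' : ContinuousOn f' (Set.uIcc (0:ℝ) R₀) := by
    rw [Set.uIcc_of_le hR₀.le]
    intro r hr
    have h1 : ContinuousAt (fun x : ℝ => x^(α-1)) r := by
      rcases eq_or_ne r 0 with h | h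
      · subst h; exact Real.continuousAt_rpow_const _ _ (Or.inr (by linarith))
      · exact Real.continuousAt_rpow_const _ _ (Or.inl h)
    have h2 : ContinuousAt (fun x : ℝ => x^α) r := by
      rcases eq_or_ne r 0 with h | h
      · subst h; exact Real.continuousAt_rpow_const _ _ (Or.inr (by linarith))
      · exact Real.continuousAt_rpow_const _ _ (Or.inl h)
    exact (((continuousAt_const.mul h1).div
      ((h2.add continuousAt_const).pow 2) (pow_ne_zero 2 (hPpos r hr.1).ne')).continuousWithinAt)
  have hcontg : ContinuousOn g (f '' Set.uIcc (0:ℝ) R₀) := by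
    have hsub : f '' Set.uIcc (0:ℝ) R₀ ⊆ Set.Ico 0 1 := by
      rw [Set.uIcc_of_le hR₀.le]
      rintro _ ⟨r, hr, rfl⟩
      exact ⟨hfnn r hr.1, hflt1 r hr.1⟩
    refine ContinuousOn.mono ?_ hsub
    intro t ht
    refine (continuousAt_const.mul ?_).continuousWithinAt
    have h1 : ContinuousAt (fun t : ℝ => t^a) t := by
      rcases eq_or_ne t 0 with h | h
      · subst h; exact Real.continuousAt_rpow_const _ _ (Or.inr ha0.le)
      · exact Real.continuousAt_rpow_const _ _ (Or.inl h)
    have h2 : ContinuousAt (fun t : ℝ => (1-t)^(-c-1)) t := by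
      have : (1:ℝ) - t ≠ 0 := by
        have := ht.2; intro hcon; simp only [sub_eq_zero] at hcon; rw [← hcon] at this; linarith
      exact ((continuous_const.sub continuous_id).continuousAt).rpow_const (Or.inl this)
    exact h1.mul h2
  have hpointwise : ∀ r ∈ Set.uIcc (0:ℝ) R₀,
      (1 + κ * r ^ (-α)) ^ (-(U:ℝ)) * (2*r/R₀^2) = f' r • (g ∘ f) r := by
    intro r hr
    rw [Set.uIcc_of_le hR₀.le] at hr
    rcases eq_or_lt_of_le hr.1 with h | h
    · subst h
      simp only [hf', hf, hg, Function.comp, smul_eq_mul]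
      rw [zero_rpow (by linarith : α - 1 ≠ 0)]
      simp
    · -- r > 0
      have hr0 : 0 < r := h
      have hrα : (0:ℝ) < r ^ α := rpow_pos_of_pos hr0 α
      have hP : (0:ℝ) < r^α + κ := hPpos r hr0.le
      simp only [hf', hf, hg, Function.comp, smul_eq_mul]
      have lhs_eq : (1 + κ * r ^ (-α)) ^ (-(U:ℝ)) * (2*r/R₀^2)
          = (2/R₀^2) * (r ^ (α*(U:ℝ)+1) / (r^α+κ) ^ ((U:ℝ))) := by
        have e1 : 1 + κ * r ^ (-α) = (r^α + κ) / r^α := by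
          rw [rpow_neg hr0.le]
          field_simp
        rw [e1, div_rpow hP.le hrα.le, rpow_neg hP.le, rpow_neg hrα.le, ← rpow_mul hr0.le,
          rpow_add_one hr0.ne' (α*(U:ℝ))]
        field_simp
      rw [lhs_eq]
      have rhs_eq : (κ^c*c) * ((κ*α*r^(α-1)/(r^α+κ)^2) *
            ((r^α/(r^α+κ))^a * (1 - r^α/(r^α+κ))^(-c-1)))
          = 2 * (r ^ (α*(U:ℝ)+1) / (r^α+κ) ^ ((U:ℝ))) := by
        set P := r^α + κ with hPdef
        have e1 : 1 - r^α/P = κ/P := by field_simp; ring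
        rw [e1, div_rpow hrα.le hP.le, div_rpow hκ.le hP.le, ← rpow_mul hr0.le, ha, hc]
        have hPa : (0:ℝ) < P ^ ((U:ℝ)+2/α-1) := rpow_pos_of_pos hP _
        have hPc : (0:ℝ) < P ^ (-(2/α)-1) := rpow_pos_of_pos hP _
        have hPU : (0:ℝ) < P ^ ((U:ℝ)) := rpow_pos_of_pos hP _
        have hκc : (0:ℝ) < κ ^ (-(2/α)-1) := rpow_pos_of_pos hκ _
        have hκ2 : (0:ℝ) < κ ^ (2/α) := rpow_pos_of_pos hκ _
        field_simp
        have k1 : κ ^ (2/α) * κ * κ ^ ((-2-α)/α) = 1 := by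
          rw [← rpow_add_one hκ.ne', ← rpow_add hκ,
            show 2/α+1+(-2-α)/α = 0 by field_simp; ring,
            rpow_zero]
        have k2 : r ^ (α-1) * r ^ ((U:ℝ)*α+2-α) = r ^ (α*(U:ℝ)+1) := by
          rw [← rpow_add hr0]; congr 1; ring
        have k3 : P^(2:ℕ) * (P ^ (((U:ℝ)*α+2-α)/α) * P ^ ((-2-α)/α)) = P ^ ((U:ℝ)) := by
          rw [← rpow_natCast P 2, ← rpow_add hP, ← rpow_add hP]
          congr 1
          field_simp
          ring
        have e2 : r ^ (α * (U:ℝ) + 2 - α) = r ^ ((U:ℝ)*α+2-α) := by ring_nf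
        have e3 : P ^ ((α * (U:ℝ) + 2 - α) / α) = P ^ (((U:ℝ)*α+2-α)/α) := by ring_nf
        rw [e2, e3]
        calc _ = (κ ^ (2/α) * κ * κ ^ ((-2-α)/α)) * (r ^ (α-1) * r ^ ((U:ℝ)*α+2-α)) * P^((U:ℝ)) := by
              ring
          _ = (r ^ (α*(U:ℝ)+1)) * P^((U:ℝ)) := by rw [k1, k2]; ring
          _ = _ := by
              rw [← k3]; ring
      calc (2/R₀^2) * (r ^ (α*(U:ℝ)+1) / (r^α+κ) ^ ((U:ℝ)))
          = (1/R₀^2) * (2 * (r ^ (α*(U:ℝ)+1) / (r^α+κ) ^ ((U:ℝ)))) := by ring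
        _ = (1/R₀^2) * ((κ^c*c) * ((κ*α*r^(α-1)/(r^α+κ)^2) *
              ((r^α/(r^α+κ))^a * (1 - r^α/(r^α+κ))^(-c-1)))) := by rw [rhs_eq]
        _ = _ := by ring
  have hsubst : ∫ r in (0:ℝ)..R₀, (1 + κ * r ^ (-α)) ^ (-(U:ℝ)) * (2*r/R₀^2)
      = ∫ t in (0:ℝ)..y, g t := by
    rw [intervalIntegral.integral_congr hpointwise,
      intervalIntegral.integral_comp_smul_deriv' hderiv hcontf' hcontg, hf0]
  rw [hsubst]
  have hyform : 1 / (κ * R₀ ^ (-α) + 1) = y := by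
    rw [hy, hf]
    have hrα : (0:ℝ) < R₀ ^ α := rpow_pos_of_pos hR₀ α
    rw [rpow_neg hR₀.le]
    rw [div_eq_div_iff (by positivity) (hPpos R₀ hR₀.le).ne']
    field_simp
    ring
  rw [hyform]
  -- FTC part
  have hcont1c : ContinuousOn (fun t : ℝ => (1-t)^(-c)) (Set.uIcc (0:ℝ) y) := by
    rw [Set.uIcc_of_le hy0.le]
    intro t ht
    have h3 : (1:ℝ) - t ≠ 0 := by
      have := lt_of_le_of_lt ht.2 hy1
      intro hcon; simp only [sub_eq_zero] at hcon; rw [← hcon] at this; linarith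
    exact (((continuous_const.sub continuous_id).continuousAt).rpow_const
      (Or.inl h3)).continuousWithinAt
  have hcont1c1 : ContinuousOn (fun t : ℝ => (1-t)^(-c-1)) (Set.uIcc (0:ℝ) y) := by
    rw [Set.uIcc_of_le hy0.le]
    intro t ht
    have h3 : (1:ℝ) - t ≠ 0 := by
      have := lt_of_le_of_lt ht.2 hy1
      intro hcon; simp only [sub_eq_zero] at hcon; rw [← hcon] at this; linarith
    exact (((continuous_const.sub continuous_id).continuousAt).rpow_const
      (Or.inl h3)).continuousWithinAt
  have hconta : ContinuousOn (fun t : ℝ => t^a) (Set.uIcc (0:ℝ) y) := by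
    intro t _
    refine ContinuousAt.continuousWithinAt ?_
    rcases eq_or_ne t 0 with h | h
    · subst h; exact Real.continuousAt_rpow_const _ _ (Or.inr ha0.le)
    · exact Real.continuousAt_rpow_const _ _ (Or.inl h)
  have hint1 : IntervalIntegrable (fun t : ℝ => t^(a-1)*(1-t)^(-c)) volume 0 y :=
    (intervalIntegral.intervalIntegrable_rpow' (by linarith : (-1:ℝ) < a-1)).mul_continuousOn
      hcont1c
  have hint2 : IntervalIntegrable (fun t : ℝ => t^a*(1-t)^(-c-1)) volume 0 y :=
    (hconta.mul hcont1c1).intervalIntegrable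
  have key : ∫ t in (0:ℝ)..y,
      (a*(t^(a-1)*(1-t)^(-c)) + c*(t^a*(1-t)^(-c-1)))
        = y^a*(1-y)^(-c) := by
    have hGcont : ContinuousOn (fun t : ℝ => t^a*(1-t)^(-c)) (Set.Icc (0:ℝ) y) := by
      rw [← Set.uIcc_of_le hy0.le]
      exact hconta.mul hcont1c
    have hGderiv : ∀ t ∈ Set.Ioo (0:ℝ) y,
        HasDerivWithinAt (fun t : ℝ => t^a*(1-t)^(-c))
          (a*(t^(a-1)*(1-t)^(-c)) + c*(t^a*(1-t)^(-c-1))) (Set.Ioi t) t := by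
      intro t ht
      have ht1 : (1:ℝ) - t ≠ 0 := by
        have := lt_trans ht.2 hy1
        intro hcon; simp only [sub_eq_zero] at hcon; rw [← hcon] at this; linarith
      have h1 : HasDerivAt (fun t : ℝ => t^a) (a * t^(a-1)) t :=
        Real.hasDerivAt_rpow_const (Or.inl ht.1.ne')
      have h2 : HasDerivAt (fun t : ℝ => (1-t)^(-c)) ((-1) * (-c) * (1-t)^(-c-1)) t := by
        have hs : HasDerivAt (fun t : ℝ => 1 - t) (-1) t := by
          simpa using (hasDerivAt_id t).const_sub 1
        exact hs.rpow_const (Or.inl ht1)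
      refine HasDerivAt.hasDerivWithinAt ?_
      have := h1.mul h2
      refine this.congr_deriv ?_
      ring
    have hintsum : IntervalIntegrable
        (fun t : ℝ => a*(t^(a-1)*(1-t)^(-c)) + c*(t^a*(1-t)^(-c-1))) volume 0 y :=
      (hint1.const_mul a).add (hint2.const_mul c)
    rw [intervalIntegral.integral_eq_sub_of_hasDeriv_right_of_le hy0.le hGcont hGderiv hintsum]
    rw [zero_rpow ha0.ne']
    ring
  rw [intervalIntegral.integral_add (hint1.const_mul a) (hint2.const_mul c),
    intervalIntegral.integral_const_mul, intervalIntegral.integral_const_mul] at key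
  have hincB : incBeta y a (1-c) = ∫ t in (0:ℝ)..y, t^(a-1)*(1-t)^(-c) := by
    rw [incBeta]
    congr 1
    funext t
    congr 2
    ring
  rw [hg]
  rw [intervalIntegral.integral_const_mul]
  rw [hincB]
  linear_combination (κ^c/R₀^2) * key

/-- Laplace transform of the BS-to-D2D interference (Proposition 1): if `R` has density
`2r/R₀²` on `[0,R₀]`, `Y ~ Gamma(U,1)` is independent of `R`, `κ > 0`, `α > 2`, then
`E[exp(-κ R⁻ᵅ Y)] = (κ^{2/α}/R₀²)[y^{U+2/α-1}(1-y)^{-2/α} - (U+2/α-1) B(y; U+2/α-1, 1-2/α)]`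
with `y = 1/(κ R₀⁻ᵅ + 1)`. -/
theorem bs_interference_laplace
    {Ω : Type*} [MeasurableSpace Ω] (μ : Measure Ω) [IsProbabilityMeasure μ]
    (R Y : Ω → ℝ) (hR : Measurable R) (hY : Measurable Y)
    (R₀ : ℝ) (hR₀ : 0 < R₀)
    (hRcdf : ∀ t ∈ Set.Icc (0:ℝ) R₀, (μ {ω | R ω ≤ t}).toReal = t ^ 2 / R₀ ^ 2)
    (hRrange : ∀ ω, R ω ∈ Set.Icc (0:ℝ) R₀)
    (U : ℕ) (hU : 1 ≤ U) (hYgamma : μ.map Y = gammaMeasure U 1)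
    (hindep : IndepFun R Y μ)
    (κ α : ℝ) (hκ : 0 < κ) (hα : 2 < α) :
    ∫ ω, Real.exp (-(κ * R ω ^ (-α) * Y ω)) ∂μ
      = (κ ^ (2 / α) / R₀ ^ 2) *
          ((1 / (κ * R₀ ^ (-α) + 1)) ^ ((U : ℝ) + 2 / α - 1)
              * (1 - 1 / (κ * R₀ ^ (-α) + 1)) ^ (-(2 / α))
            - ((U : ℝ) + 2 / α - 1) *
                incBeta (1 / (κ * R₀ ^ (-α) + 1)) ((U : ℝ) + 2 / α - 1) (1 - 2 / α)) := by
  rw [step2 μ R Y hR hY R₀ hR₀ hRrange U hU hYgamma hindep κ α hκ hα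
    (fun s hs => gamma_laplace U hU hs)]
  rw [map_R_eq μ R hR R₀ hR₀ hRcdf hRrange]
  have hGmeas : Measurable (fun r : ℝ => (1 + κ * r ^ (-α)) ^ (-(U:ℝ))) := by
    fun_prop
  rw [integral_density R₀ hR₀ _ hGmeas]
  exact calc_main κ α R₀ hκ hα hR₀ U hU
end
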